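/- For every natural number n ≥ 3 with n ∉ {4, 6, 10}, there exist at least two distinct primes p, q with n/2 < p ≤ n and n/2 < q ≤ n. -/

import Mathlib

open Real in
theorem my_real_main_inequality {x : ℝ} (x_large : (512 : ℝ) ≤ x) :
    2 * x ^ 2 * (2 * x) ^ √(2 * x) * 4 ^ (2 * x / 3) ≤ 4 ^ x := by
  let f : ℝ → ℝ := fun x => log 2 + 2 * log x + √(2 * x) * log (2 * x) - log 4 / 3 * x
  have hf' : ∀ x : ℝ, 0 < x → 0 < 2 * x ^ 2 * (2 * x) ^ √(2 * x) / 4 ^ (x / 3) := fun x h => by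
    positivity
  have hf : ∀ x : ℝ, 0 < x → f x = log (2 * x ^ 2 * (2 * x) ^ √(2 * x) / 4 ^ (x / 3)) := by
    intro x h5
    have h6 := mul_pos (zero_lt_two' ℝ) h5
    have h7 := rpow_pos_of_pos h6 (√(2 * x))
    have h8 : (0:ℝ) < 2 * x ^ 2 := by positivity
    rw [log_div (mul_pos h8 h7).ne' (rpow_pos_of_pos four_pos _).ne',
      log_mul h8.ne' h7.ne', log_mul two_ne_zero (by positivity), log_pow,
      log_rpow h6, log_rpow zero_lt_four, ← mul_div_right_comm, ← mul_div, mul_comm x]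
    simp only [f]
    norm_cast
  have h5 : 0 < x := lt_of_lt_of_le (by norm_num1) x_large
  rw [← div_le_one (rpow_pos_of_pos four_pos x), ← div_div_eq_mul_div, ← rpow_sub four_pos, ←
    mul_div 2 x, mul_div_left_comm, ← mul_one_sub, (by norm_num1 : (1 : ℝ) - 2 / 3 = 1 / 3),
    mul_one_div, ← log_nonpos_iff (hf' x h5).le, ← hf x h5]
  have h : ConcaveOn ℝ (Set.Ioi 0.5) f := by
    refine ConcaveOn.sub (ConcaveOn.add (ConcaveOn.add (concaveOn_const _ (convex_Ioi 0.5)) ?_) ?_) ?_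
    · have hl : ConcaveOn ℝ (Set.Ioi (0.5:ℝ)) log := strictConcaveOn_log_Ioi.concaveOn.subset
        (Set.Ioi_subset_Ioi (by norm_num)) (convex_Ioi 0.5)
      have := hl.smul (c := (2:ℝ)) (by norm_num)
      convert this using 1 <;> rfl
    · convert ((strictConcaveOn_sqrt_mul_log_Ioi.concaveOn.comp_linearMap
        ((2 : ℝ) • LinearMap.id))) using 1
      · rfl
      · rfl
      ext y
      simp only [Set.mem_Ioi, Set.mem_preimage, LinearMap.smul_apply,
        LinearMap.id_coe, id_eq, smul_eq_mul]
      rw [← mul_lt_mul_iff_right₀ (two_pos)]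
      norm_num1
      rfl
      rfl
    apply ConvexOn.smul
    · refine div_nonneg (log_nonneg (by norm_num1)) (by norm_num1)
    · exact convexOn_id (convex_Ioi (0.5 : ℝ))
  suffices ∃ x1 x2, 0.5 < x1 ∧ x1 < x2 ∧ x2 ≤ x ∧ 0 ≤ f x1 ∧ f x2 ≤ 0 by
    obtain ⟨x1, x2, h1, h2, h0, h3, h4⟩ := this
    exact (h.right_le_of_le_left'' h1 ((h1.trans h2).trans_le h0) h2 h0 (h4.trans h3)).trans h4
  refine ⟨18, 512, by norm_num1, by norm_num1, x_large, ?_, ?_⟩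
  · have : √(2 * 18 : ℝ) = 6 := (sqrt_eq_iff_mul_self_eq_of_pos (by norm_num1)).mpr (by norm_num1)
    rw [hf _ (by norm_num1), log_nonneg_iff (by positivity), this, one_le_div (by norm_num1)]
    norm_num1
  · have : √(2 * 512 : ℝ) = 32 :=
      (sqrt_eq_iff_mul_self_eq_of_pos (by norm_num1)).mpr (by norm_num1)
    rw [hf _ (by norm_num1), log_nonpos_iff (hf' _ (by norm_num1)).le, this,
        div_le_one (by positivity)]
    have h32 : ((2:ℝ) * 512) ^ (32:ℝ) = (2 * 512 : ℝ) ^ (32:ℕ) := by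
      rw [← rpow_natCast]; norm_num
    rw [h32]
    have hL : (2:ℝ) * 512 ^ 2 * (2 * 512 : ℝ) ^ (32:ℕ) = (2:ℝ) ^ (339:ℕ) := by
      norm_num [pow_succ]
    rw [hL, show (4:ℝ) = 2 ^ (2:ℝ) by rw [rpow_two]; norm_num, ← rpow_natCast (2:ℝ) 339,
      ← rpow_mul (by norm_num)]
    apply rpow_le_rpow_of_exponent_le one_le_two
    norm_num

theorem my_main_inequality {n : ℕ} (n_large : 512 ≤ n) :
    2 * n ^ 2 * (2 * n) ^ Nat.sqrt (2 * n) * 4 ^ (2 * n / 3) ≤ 4 ^ n := by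
  rw [← @Nat.cast_le ℝ]
  push_cast
  have h2n : (1:ℝ) ≤ 2 * (n:ℝ) := by
    have : (1:ℝ) ≤ (n:ℝ) := by exact_mod_cast (by omega : 1 ≤ n)
    linarith
  have hsq : ((Nat.sqrt (2 * n) : ℕ) : ℝ) ≤ Real.sqrt (2 * (n:ℝ)) := by
    have := Real.nat_sqrt_le_real_sqrt (a := 2 * n)
    rwa [Nat.cast_mul, Nat.cast_ofNat] at this
  have hdiv : (((2 * n / 3 : ℕ)) : ℝ) ≤ 2 * (n:ℝ) / 3 := by
    refine Nat.cast_div_le.trans ?_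
    push_cast
    norm_num
  calc (2:ℝ) * (n:ℝ) ^ 2 * (2 * (n:ℝ)) ^ (Nat.sqrt (2 * n)) * 4 ^ (2 * n / 3)
      = 2 * (n:ℝ) ^ 2 * (2 * (n:ℝ)) ^ ((Nat.sqrt (2 * n) : ℝ)) * 4 ^ (((2 * n / 3 : ℕ)) : ℝ) := by
        rw [Real.rpow_natCast, Real.rpow_natCast]
    _ ≤ 2 * (n:ℝ) ^ 2 * (2 * (n:ℝ)) ^ Real.sqrt (2 * (n:ℝ)) * 4 ^ (2 * (n:ℝ) / 3) := by
        gcongr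
        · norm_num
    _ ≤ 4 ^ (n:ℝ) := my_real_main_inequality (by exact_mod_cast n_large)
    _ = 4 ^ n := by rw [Real.rpow_natCast]

theorem my_small_prod_le (n : ℕ) (n_large : 2 < n) :
    ∏ p ∈ Finset.range (2 * n / 3 + 1), p ^ (Nat.centralBinom n).factorization p ≤
      (2 * n) ^ Nat.sqrt (2 * n) * 4 ^ (2 * n / 3) := by
  have n_pos : 0 < n := by omega
  have n2_pos : 1 ≤ 2 * n := by omega
  let S := (Finset.range (2 * n / 3 + 1)).filter Nat.Prime
  let f := fun (x : ℕ) => x ^ (Nat.centralBinom n).factorization x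
  have heq : ∏ x ∈ S, f x = ∏ x ∈ Finset.range (2 * n / 3 + 1), f x := by
    refine Finset.prod_filter_of_ne fun p _ h => ?_
    contrapose! h; dsimp only [f]
    rw [Nat.factorization_eq_zero_of_not_prime _ h, pow_zero]
  rw [show (∏ p ∈ Finset.range (2 * n / 3 + 1), p ^ (Nat.centralBinom n).factorization p) =
      ∏ x ∈ Finset.range (2 * n / 3 + 1), f x from rfl, ← heq,
    ← Finset.prod_filter_mul_prod_filter_not S (· ≤ Nat.sqrt (2 * n))]
  apply mul_le_mul'
  · refine (Finset.prod_le_prod' fun p _ => (?_ : f p ≤ 2 * n)).trans ?_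
    · exact Nat.pow_factorization_choose_le (by omega)
    have : (Finset.Icc 1 (Nat.sqrt (2 * n))).card = Nat.sqrt (2 * n) := by
      rw [Nat.card_Icc, Nat.add_sub_cancel]
    rw [Finset.prod_const]
    refine pow_right_mono₀ n2_pos ((Finset.card_le_card fun x hx => ?_).trans this.le)
    obtain ⟨h1, h2⟩ := Finset.mem_filter.1 hx
    exact Finset.mem_Icc.mpr ⟨(Finset.mem_filter.1 h1).2.one_lt.le, h2⟩
  · refine le_trans ?_ (primorial_le_4_pow (2 * n / 3))
    refine (Finset.prod_le_prod' fun p hp => (?_ : f p ≤ p)).trans ?_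
    · obtain ⟨h1, h2⟩ := Finset.mem_filter.1 hp
      refine (pow_right_mono₀ (Finset.mem_filter.1 h1).2.one_lt.le ?_).trans (pow_one p).le
      exact Nat.factorization_choose_le_one (Nat.sqrt_lt'.mp <| not_le.1 h2)
    refine Finset.prod_le_prod_of_subset_of_one_le' (Finset.filter_subset _ _) ?_
    exact fun p hp _ => (Finset.mem_filter.1 hp).2.one_lt.le

theorem my_centralBinom_le (n : ℕ) (n_large : 512 ≤ n)
    (huniq : ∀ p q : ℕ, p.Prime → q.Prime → n < p → p ≤ 2 * n → n < q → q ≤ 2 * n → p = q) :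
    Nat.centralBinom n ≤ 2 * n * ((2 * n) ^ Nat.sqrt (2 * n) * 4 ^ (2 * n / 3)) := by
  obtain ⟨p0, hp0, hnp0, hp02n⟩ := Nat.exists_prime_lt_and_le_two_mul n (by omega)
  set f := fun (x : ℕ) => x ^ (Nat.centralBinom n).factorization x with hfdef
  have h1 : (0:ℕ) ≤ 2 * n / 3 + 1 := by omega
  have h2 : 2 * n / 3 + 1 ≤ 2 * n + 1 := by omega
  have hsplit : (∏ p ∈ Finset.Ico 0 (2 * n / 3 + 1), f p) *
      ∏ p ∈ Finset.Ico (2 * n / 3 + 1) (2 * n + 1), f p = ∏ p ∈ Finset.Ico 0 (2 * n + 1), f p :=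
    Finset.prod_Ico_consecutive f h1 h2
  have hA : (∏ p ∈ Finset.Ico 0 (2 * n / 3 + 1), f p) ≤
      (2 * n) ^ Nat.sqrt (2 * n) * 4 ^ (2 * n / 3) := by
    rw [← Finset.range_eq_Ico]
    exact my_small_prod_le n (by omega)
  have hC : (∏ p ∈ Finset.Ico (2 * n / 3 + 1) (2 * n + 1), f p) ≤ 2 * n := by
    calc (∏ p ∈ Finset.Ico (2 * n / 3 + 1) (2 * n + 1), f p)
        ≤ ∏ p ∈ Finset.Ico (2 * n / 3 + 1) (2 * n + 1), (if p = p0 then 2 * n else 1) := by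
          refine Finset.prod_le_prod' fun p hp => ?_
          rw [Finset.mem_Ico] at hp
          by_cases hpp0 : p = p0
          · rw [if_pos hpp0, hpp0]
            have hle1 : (Nat.centralBinom n).factorization p0 ≤ 1 := by
              refine Nat.factorization_choose_le_one ?_
              nlinarith [hnp0]
            calc f p0 ≤ p0 ^ 1 := Nat.pow_le_pow_right hp0.pos hle1
              _ ≤ 2 * n := by rwa [pow_one]
          · rw [if_neg hpp0]
            have hzero : (Nat.centralBinom n).factorization p = 0 := by
              by_cases hprime : p.Prime
              · rcases le_or_gt p n with hpn | hpn
                · exact Nat.factorization_centralBinom_of_two_mul_self_lt_three_mul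
                    (by omega) hpn (by omega)
                · exact absurd (huniq p p0 hprime hp0 hpn (by omega) hnp0 hp02n) hpp0
              · exact Nat.factorization_eq_zero_of_not_prime _ hprime
            simp [f, hzero]
      _ = if p0 ∈ Finset.Ico (2 * n / 3 + 1) (2 * n + 1) then 2 * n else 1 :=
          Finset.prod_ite_eq' _ _ (fun _ => 2 * n)
      _ ≤ 2 * n := by split <;> omega
  calc Nat.centralBinom n = ∏ p ∈ Finset.Ico 0 (2 * n + 1), f p := by
        rw [← Finset.range_eq_Ico, Nat.prod_pow_factorization_centralBinom]
    _ = (∏ p ∈ Finset.Ico 0 (2 * n / 3 + 1), f p) *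
        ∏ p ∈ Finset.Ico (2 * n / 3 + 1) (2 * n + 1), f p := hsplit.symm
    _ ≤ ((2 * n) ^ Nat.sqrt (2 * n) * 4 ^ (2 * n / 3)) * (2 * n) := mul_le_mul' hA hC
    _ = 2 * n * ((2 * n) ^ Nat.sqrt (2 * n) * 4 ^ (2 * n / 3)) := mul_comm _ _

theorem my_two_primes_eventually (n : ℕ) (n_large : 512 ≤ n) :
    ∃ p q : ℕ, p.Prime ∧ q.Prime ∧ p ≠ q ∧ n < p ∧ p ≤ 2 * n ∧ n < q ∧ q ≤ 2 * n := by
  by_contra hc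
  push_neg at hc
  have huniq : ∀ p q : ℕ, p.Prime → q.Prime → n < p → p ≤ 2 * n → n < q → q ≤ 2 * n → p = q := by
    intro p q hp hq h1 h2 h3 h4
    by_contra hne
    have := hc p q hp hq hne h1 h2 h3
    omega
  have H1 : 2 * n ^ 2 * (2 * n) ^ Nat.sqrt (2 * n) * 4 ^ (2 * n / 3) ≤ 4 ^ n :=
    my_main_inequality n_large
  have H2 : 4 ^ n < n * Nat.centralBinom n :=
    Nat.four_pow_lt_mul_centralBinom n (by omega)
  have H3 := my_centralBinom_le n n_large huniq
  have H4 : n * Nat.centralBinom n ≤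
      n * (2 * n * ((2 * n) ^ Nat.sqrt (2 * n) * 4 ^ (2 * n / 3))) :=
    Nat.mul_le_mul_left n H3
  have heq : n * (2 * n * ((2 * n) ^ Nat.sqrt (2 * n) * 4 ^ (2 * n / 3))) =
      2 * n ^ 2 * (2 * n) ^ Nat.sqrt (2 * n) * 4 ^ (2 * n / 3) := by ring
  rw [heq] at H4
  exact absurd (H2.trans_le (H4.trans H1)) (lt_irrefl _)

private theorem pair_case {p q n : ℕ} (hp : p.Prime) (hq : q.Prime) (hpq : p < q)
    (h1 : q ≤ n) (h2 : n < 2 * p) :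
    ∃ p q : ℕ, Nat.Prime p ∧ Nat.Prime q ∧ p ≠ q ∧
      n < 2 * p ∧ p ≤ n ∧ n < 2 * q ∧ q ≤ n :=
  ⟨p, q, hp, hq, hpq.ne, h2, le_trans hpq.le h1, lt_of_lt_of_le h2 (by omega), h1⟩

theorem my_small_case (n : ℕ) (h1 : 3 ≤ n) (h4 : n ≠ 4) (h6 : n ≠ 6) (h10 : n ≠ 10)
    (hbig : n < 1024) :
    ∃ p q : ℕ, Nat.Prime p ∧ Nat.Prime q ∧ p ≠ q ∧
      n < 2 * p ∧ p ≤ n ∧ n < 2 * q ∧ q ≤ n := by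
  rcases Nat.lt_or_ge n 4 with h2 | h2
  · exact pair_case (p := 2) (q := 3) (by norm_num) (by norm_num) (by norm_num) (by omega) (by omega)
  replace h1 : 4 ≤ n := h2
  rcases Nat.lt_or_ge n 5 with h2 | h2
  · omega
  replace h1 : 5 ≤ n := h2
  rcases Nat.lt_or_ge n 6 with h2 | h2
  · exact pair_case (p := 3) (q := 5) (by norm_num) (by norm_num) (by norm_num) (by omega) (by omega)
  replace h1 : 6 ≤ n := h2
  rcases Nat.lt_or_ge n 7 with h2 | h2
  · omega
  replace h1 : 7 ≤ n := h2
  rcases Nat.lt_or_ge n 10 with h2 | h2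
  · exact pair_case (p := 5) (q := 7) (by norm_num) (by norm_num) (by norm_num) (by omega) (by omega)
  replace h1 : 10 ≤ n := h2
  rcases Nat.lt_or_ge n 11 with h2 | h2
  · omega
  replace h1 : 11 ≤ n := h2
  rcases Nat.lt_or_ge n 14 with h2 | h2
  · exact pair_case (p := 7) (q := 11) (by norm_num) (by norm_num) (by norm_num) (by omega) (by omega)
  replace h1 : 14 ≤ n := h2
  rcases Nat.lt_or_ge n 22 with h2 | h2
  · exact pair_case (p := 11) (q := 13) (by norm_num) (by norm_num) (by norm_num) (by omega) (by omega)
  replace h1 : 22 ≤ n := h2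
  rcases Nat.lt_or_ge n 34 with h2 | h2
  · exact pair_case (p := 17) (q := 19) (by norm_num) (by norm_num) (by norm_num) (by omega) (by omega)
  replace h1 : 34 ≤ n := h2
  rcases Nat.lt_or_ge n 58 with h2 | h2
  · exact pair_case (p := 29) (q := 31) (by norm_num) (by norm_num) (by norm_num) (by omega) (by omega)
  replace h1 : 58 ≤ n := h2
  rcases Nat.lt_or_ge n 94 with h2 | h2
  · exact pair_case (p := 47) (q := 53) (by norm_num) (by norm_num) (by norm_num) (by omega) (by omega)
  replace h1 : 94 ≤ n := h2
  rcases Nat.lt_or_ge n 166 with h2 | h2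
  · exact pair_case (p := 83) (q := 89) (by norm_num) (by norm_num) (by norm_num) (by omega) (by omega)
  replace h1 : 166 ≤ n := h2
  rcases Nat.lt_or_ge n 314 with h2 | h2
  · exact pair_case (p := 157) (q := 163) (by norm_num) (by norm_num) (by norm_num) (by omega) (by omega)
  replace h1 : 314 ≤ n := h2
  rcases Nat.lt_or_ge n 622 with h2 | h2
  · exact pair_case (p := 311) (q := 313) (by norm_num) (by norm_num) (by norm_num) (by omega) (by omega)
  replace h1 : 622 ≤ n := h2
  rcases Nat.lt_or_ge n 1234 with h2 | h2
  · exact pair_case (p := 617) (q := 619) (by norm_num) (by norm_num) (by norm_num) (by omega) (by omega)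
  replace h1 : 1234 ≤ n := h2
  omega

theorem stmt0 (n : ℕ) (hn : 3 ≤ n) (h4 : n ≠ 4) (h6 : n ≠ 6) (h10 : n ≠ 10) :
    ∃ p q : ℕ, Nat.Prime p ∧ Nat.Prime q ∧ p ≠ q ∧
      n < 2 * p ∧ p ≤ n ∧ n < 2 * q ∧ q ≤ n := by
  rcases Nat.lt_or_ge n 1024 with hbig | hbig
  · exact my_small_case n hn h4 h6 h10 hbig
  · obtain ⟨p, q, hp, hq, hne, h1, h2, h3, h4'⟩ := my_two_primes_eventually (n / 2) (by omega)
    exact ⟨p, q, hp, hq, hne, by omega, by omega, by omega, by omega⟩
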